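/- Let K be a field of characteristic zero and let r ∈ K be arithmetically fixed. Then there exist a positive integer m and a polynomial T(x, x₁, …, x_m) with integer coefficients such that {r} = {x ∈ K : ∃x₁ … ∃x_m ∈ K, T(x, x₁, …, x_m) = 0}. -/

import Mathlib

/-- A map `f` is *arithmetic* on a subset `A` of a field `K`. -/
def ArithmeticMap {K : Type*} [Field K] (A : Set K) (f : K → K) : Prop :=
  ((1 : K) ∈ A → f 1 = 1) ∧
  (∀ a b : K, a ∈ A → b ∈ A → a + b ∈ A → f (a + b) = f a + f b) ∧
  (∀ a b : K, a ∈ A → b ∈ A → a * b ∈ A → f (a * b) = f a * f b)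

/-- An element `r` of a field `K` is *arithmetically fixed* if there is a finite set
`A ⊆ K` with `r ∈ A` such that every arithmetic map `f : A → K` fixes `r`. -/
def ArithFixed {K : Type*} [Field K] (r : K) : Prop :=
  ∃ A : Finset K, r ∈ A ∧ ∀ f : K → K, ArithmeticMap (↑A : Set K) f → f r = r

namespace TyszkaProof

open MvPolynomial

open scoped Classical

variable {K : Type*} [Field K]

/-- Combine a list of polynomials into a single one, using a binary "anisotropic"
polynomial `P`. -/
noncomputable def comb (P : MvPolynomial (Fin 2) ℤ) {n : ℕ}
    (l : List (MvPolynomial (Fin n) ℤ)) : MvPolynomial (Fin n) ℤ :=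
  l.foldr (fun e acc => aeval ![e, acc] P) 0

lemma aeval_aeval_pair {n : ℕ} (P : MvPolynomial (Fin 2) ℤ) (w : Fin n → K)
    (e f : MvPolynomial (Fin n) ℤ) :
    aeval w (aeval ![e, f] P) = aeval ![aeval w e, aeval w f] P := by
  have h := MvPolynomial.comp_aeval (R := ℤ) (f := ![e, f])
      (φ := (aeval w : MvPolynomial (Fin n) ℤ →ₐ[ℤ] K))
  have h2 := congrArg (fun (g : MvPolynomial (Fin 2) ℤ →ₐ[ℤ] K) => g P) h
  simp only [AlgHom.comp_apply] at h2
  have h3 : (fun i => aeval w (![e, f] i)) = ![aeval w e, aeval w f] := by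
    funext i
    fin_cases i <;> simp
  rw [h2, h3]

lemma comb_eq_zero_iff (P : MvPolynomial (Fin 2) ℤ)
    (HP : ∀ a b : K, aeval ![a, b] P = 0 ↔ a = 0 ∧ b = 0) {n : ℕ}
    (w : Fin n → K) (l : List (MvPolynomial (Fin n) ℤ)) :
    aeval w (comb P l) = 0 ↔ ∀ e ∈ l, aeval w e = 0 := by
  induction l with
  | nil => simp [comb]
  | cons e l ih =>
    have : comb P (e :: l) = aeval ![e, comb P l] P := rfl
    rw [this, aeval_aeval_pair, HP]
    simp only [List.mem_cons]
    constructor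
    · rintro ⟨h1, h2⟩ f hf
      rcases hf with rfl | hf
      · exact h1
      · exact (ih.mp h2) f hf
    · intro h
      exact ⟨h e (Or.inl rfl), ih.mpr fun f hf => h f (Or.inr hf)⟩

/-- The variable polynomial associated to an element of `A` (index shifted by one). -/
noncomputable def xv (A : Finset K) (a : K) : MvPolynomial (Fin (A.card + 1)) ℤ :=
  if h : a ∈ A then X (Fin.succ (A.equivFin ⟨a, h⟩)) else 0

lemma aeval_xv (A : Finset K) (w : Fin (A.card + 1) → K) (a : K) :
    aeval w (xv A a) = if h : a ∈ A then w (Fin.succ (A.equivFin ⟨a, h⟩)) else 0 := by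
  unfold xv
  split <;> simp

/-- The list of polynomial equations encoding arithmetic maps on `A`, together with the
head equation `x = value at r`. -/
noncomputable def eqns (A : Finset K) (r : K) :
    List (MvPolynomial (Fin (A.card + 1)) ℤ) :=
  (X 0 - xv A r) ::
    ((if (1 : K) ∈ A then [xv A 1 - 1] else []) ++
      ((A ×ˢ A).toList.filterMap fun p =>
        if p.1 + p.2 ∈ A then some (xv A (p.1 + p.2) - xv A p.1 - xv A p.2) else none) ++
      ((A ×ˢ A).toList.filterMap fun p =>
        if p.1 * p.2 ∈ A then some (xv A (p.1 * p.2) - xv A p.1 * xv A p.2) else none))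

theorem caseB (r : K) (A : Finset K) (hrA : r ∈ A)
    (hfix : ∀ f : K → K, ArithmeticMap (↑A : Set K) f → f r = r)
    (P : MvPolynomial (Fin 2) ℤ)
    (HP : ∀ a b : K, aeval ![a, b] P = 0 ↔ a = 0 ∧ b = 0) :
    ∃ (m : ℕ), 0 < m ∧ ∃ T : MvPolynomial (Fin (m + 1)) ℤ,
      ({r} : Set K) = {x : K | ∃ v : Fin m → K, MvPolynomial.aeval (Fin.cons x v) T = 0} := by
  refine ⟨A.card, Finset.card_pos.mpr ⟨r, hrA⟩, comb P (eqns A r), ?_⟩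
  ext x
  simp only [Set.mem_singleton_iff, Set.mem_setOf_eq]
  constructor
  · intro hxr
    rw [hxr]
    refine ⟨fun i => ((A.equivFin.symm i : K)), ?_⟩
    rw [comb_eq_zero_iff P HP]
    set w : Fin (A.card + 1) → K := Fin.cons r fun i => ((A.equivFin.symm i : K)) with hw
    have hx : ∀ (a : K) (h : a ∈ A), aeval w (xv A a) = a := by
      intro a h
      rw [aeval_xv, dif_pos h, hw]
      rw [Fin.cons_succ]
      simp
    intro e he
    rw [eqns] at he
    rcases List.mem_cons.mp he with rfl | he
    · simp only [map_sub, aeval_X]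
      rw [hx r hrA, hw, Fin.cons_zero, sub_self]
    rcases List.mem_append.mp he with he | he
    · rcases List.mem_append.mp he with he | he
      · by_cases h1 : (1 : K) ∈ A
        · rw [if_pos h1] at he
          rcases List.mem_singleton.mp he with rfl
          simp only [map_sub, map_one]
          rw [hx 1 h1, sub_self]
        · rw [if_neg h1] at he
          simp at he
      · obtain ⟨⟨a, b⟩, hmem, hsome⟩ := List.mem_filterMap.mp he
        have hab : a ∈ A ∧ b ∈ A :=
          Finset.mem_product.mp (Finset.mem_toList.mp hmem)
        by_cases hsum : a + b ∈ A
        · rw [if_pos hsum] at hsome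
          obtain rfl := Option.some_injective _ hsome
          simp only [map_sub]
          rw [hx _ hsum, hx a hab.1, hx b hab.2]
          ring
        · rw [if_neg hsum] at hsome
          exact absurd hsome (by simp)
    · obtain ⟨⟨a, b⟩, hmem, hsome⟩ := List.mem_filterMap.mp he
      have hab : a ∈ A ∧ b ∈ A :=
        Finset.mem_product.mp (Finset.mem_toList.mp hmem)
      by_cases hprod : a * b ∈ A
      · rw [if_pos hprod] at hsome
        obtain rfl := Option.some_injective _ hsome
        simp only [map_sub, map_mul]
        rw [hx _ hprod, hx a hab.1, hx b hab.2]
        ring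
      · rw [if_neg hprod] at hsome
        exact absurd hsome (by simp)
  · rintro ⟨v, hv⟩
    rw [comb_eq_zero_iff P HP] at hv
    set w : Fin (A.card + 1) → K := Fin.cons x v with hw
    set f : K → K := fun a => if h : a ∈ A then w (Fin.succ (A.equivFin ⟨a, h⟩)) else 0 with hf
    have hfa : ∀ a : K, aeval w (xv A a) = f a := by
      intro a
      rw [aeval_xv, hf]
    have harith : ArithmeticMap (↑A : Set K) f := by
      refine ⟨?_, ?_, ?_⟩
      · intro h1
        have h1' : (1 : K) ∈ A := by exact_mod_cast h1
        have he : (xv A 1 - 1) ∈ eqns A r := by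
          rw [eqns]
          refine List.mem_cons_of_mem _ (List.mem_append.mpr (Or.inl
            (List.mem_append.mpr (Or.inl ?_))))
          rw [if_pos h1']
          exact List.mem_singleton.mpr rfl
        have := hv _ he
        simp only [map_sub, map_one] at this
        rw [hfa] at this
        linear_combination this
      · intro a b ha hb hab
        have ha' : a ∈ A := by exact_mod_cast ha
        have hb' : b ∈ A := by exact_mod_cast hb
        have hab' : a + b ∈ A := by exact_mod_cast hab
        have he : (xv A (a + b) - xv A a - xv A b) ∈ eqns A r := by
          rw [eqns]
          refine List.mem_cons_of_mem _ (List.mem_append.mpr (Or.inl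
            (List.mem_append.mpr (Or.inr ?_))))
          refine List.mem_filterMap.mpr ⟨(a, b), ?_, ?_⟩
          · exact Finset.mem_toList.mpr (Finset.mem_product.mpr ⟨ha', hb'⟩)
          · rw [if_pos hab']
        have := hv _ he
        simp only [map_sub] at this
        rw [hfa, hfa, hfa] at this
        linear_combination this
      · intro a b ha hb hab
        have ha' : a ∈ A := by exact_mod_cast ha
        have hb' : b ∈ A := by exact_mod_cast hb
        have hab' : a * b ∈ A := by exact_mod_cast hab
        have he : (xv A (a * b) - xv A a * xv A b) ∈ eqns A r := by
          rw [eqns]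
          refine List.mem_cons_of_mem _ (List.mem_append.mpr (Or.inr ?_))
          refine List.mem_filterMap.mpr ⟨(a, b), ?_, ?_⟩
          · exact Finset.mem_toList.mpr (Finset.mem_product.mpr ⟨ha', hb'⟩)
          · rw [if_pos hab']
        have := hv _ he
        simp only [map_sub, map_mul] at this
        rw [hfa, hfa, hfa] at this
        have := sub_eq_zero.mp this
        exact this
    have hfr : f r = r := hfix f harith
    have hhead := hv _ List.mem_cons_self
    simp only [map_sub, aeval_X] at hhead
    rw [hfa] at hhead
    have : w 0 = f r := sub_eq_zero.mp hhead
    rw [hw, Fin.cons_zero] at this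
    rw [this, hfr]

theorem exists_root_of_not_exP {K : Type*} [Field K] [CharZero K]
    (hP : ¬ ∃ P : MvPolynomial (Fin 2) ℤ,
      ∀ a b : K, aeval ![a, b] P = 0 ↔ a = 0 ∧ b = 0)
    (q : Polynomial ℚ) (hq : Irreducible q) : ∃ y : K, Polynomial.aeval y q = 0 := by
  by_contra hno
  push_neg at hno
  apply hP
  obtain ⟨b, hb⟩ := IsLocalization.integerNormalization_map_to_map (nonZeroDivisors ℤ) q
  set q' : Polynomial ℤ := IsLocalization.integerNormalization (nonZeroDivisors ℤ) q with hq'def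
  have hb0 : (b : ℤ) ≠ 0 := nonZeroDivisors.coe_ne_zero b
  have hbq : ((b : ℤ) : ℚ) ≠ 0 := Int.cast_ne_zero.mpr hb0
  have hqne : q ≠ 0 := hq.ne_zero
  have hmapne : q'.map (algebraMap ℤ ℚ) = Polynomial.C ((b : ℤ) : ℚ) * q := by
    rw [hb, ← Int.cast_smul_eq_zsmul ℚ, Polynomial.smul_eq_C_mul]
  have hq'ne : q' ≠ 0 := by
    intro h
    rw [h, Polynomial.map_zero] at hmapne
    exact mul_ne_zero (Polynomial.C_ne_zero.mpr hbq) hqne hmapne.symm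
  set d := q'.natDegree with hddef
  have hd1 : 1 ≤ d := by
    have h2 : q.natDegree ≤ d := by
      have h3 := Polynomial.natDegree_map_le (f := algebraMap ℤ ℚ) (p := q')
      rwa [hmapne, Polynomial.natDegree_C_mul hbq] at h3
    exact le_trans hq.natDegree_pos h2
  have hlead : ((q'.coeff d : ℤ) : K) ≠ 0 :=
    Int.cast_ne_zero.mpr (Polynomial.leadingCoeff_ne_zero.mpr hq'ne)
  refine ⟨∑ i ∈ Finset.range (d + 1),
    MvPolynomial.C (q'.coeff i) * MvPolynomial.X 0 ^ i * MvPolynomial.X 1 ^ (d - i),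
    fun a c => ?_⟩
  have heval : aeval ![a, c] (∑ i ∈ Finset.range (d + 1),
      MvPolynomial.C (q'.coeff i) * MvPolynomial.X 0 ^ i * MvPolynomial.X 1 ^ (d - i))
      = ∑ i ∈ Finset.range (d + 1), ((q'.coeff i : ℤ) : K) * a ^ i * c ^ (d - i) := by
    rw [map_sum]
    apply Finset.sum_congr rfl
    intro i _
    simp [algebraMap_int_eq, map_intCast]
  rw [heval]
  constructor
  · intro h0
    by_cases hc : c = 0
    · subst hc
      rw [Finset.sum_eq_single d] at h0
      · rw [Nat.sub_self, pow_zero, mul_one] at h0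
        rcases mul_eq_zero.mp h0 with h | h
        · exact absurd h hlead
        · exact ⟨pow_eq_zero_iff (by omega) |>.mp h, rfl⟩
      · intro i hi hne
        have : d - i ≠ 0 := by
          have := Finset.mem_range.mp hi
          omega
        rw [zero_pow this, mul_zero]
      · intro h
        exact absurd (Finset.mem_range.mpr (by omega)) h
    · exfalso
      set y : K := a / c with hy
      have hsum : ∑ i ∈ Finset.range (d + 1), ((q'.coeff i : ℤ) : K) * a ^ i * c ^ (d - i)
          = c ^ d * Polynomial.aeval y q' := by
        rw [Polynomial.aeval_eq_sum_range, Finset.mul_sum]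
        apply Finset.sum_congr rfl
        intro i hi
        have hi' : i ≤ d := Nat.lt_succ_iff.mp (Finset.mem_range.mp hi)
        have hcd : c ^ d = c ^ (d - i) * c ^ i := by
          rw [← pow_add, Nat.sub_add_cancel hi']
        rw [zsmul_eq_mul, hy, div_pow, hcd]
        field_simp
      rw [hsum] at h0
      have h4 : Polynomial.aeval y q' = 0 := by
        rcases mul_eq_zero.mp h0 with h | h
        · exact absurd h (pow_ne_zero _ hc)
        · exact h
      have h5 : Polynomial.aeval y (q'.map (algebraMap ℤ ℚ)) = 0 := by
        rw [Polynomial.aeval_map_algebraMap]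
        exact h4
      rw [hmapne, map_mul, Polynomial.aeval_C] at h5
      rcases mul_eq_zero.mp h5 with h | h
      · rw [map_intCast] at h
        exact (Int.cast_ne_zero.mpr hb0) h
      · exact hno y h
  · rintro ⟨rfl, rfl⟩
    apply Finset.sum_eq_zero
    intro i hi
    rcases Nat.eq_zero_or_pos i with rfl | hipos
    · rw [zero_pow (by omega : d - 0 ≠ 0), mul_zero]
    · rw [zero_pow (by omega : i ≠ 0), mul_zero, zero_mul]

set_option maxHeartbeats 2000000 in
set_option synthInstance.maxHeartbeats 200000 in
theorem rational_of_roots {K : Type*} [Field K] [CharZero K]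
    (r : K) (A : Finset K) (hrA : r ∈ A)
    (hfix : ∀ f : K → K, ArithmeticMap (↑A : Set K) f → f r = r)
    (hroots : ∀ q : Polynomial ℚ, Irreducible q → ∃ y : K, Polynomial.aeval y q = 0) :
    ∃ c : ℚ, r = (c : K) := by
  classical
  set R : Subalgebra ℚ K := Algebra.adjoin ℚ (A : Set K) with hRdef
  have hrR : r ∈ R := Algebra.subset_adjoin (by exact_mod_cast hrA)
  -- every ℚ-algebra homomorphism `R → K` fixes `r`
  have fixhom : ∀ φ : R →ₐ[ℚ] K, φ ⟨r, hrR⟩ = r := by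
    intro φ
    set f : K → K := fun y => if h : y ∈ R then φ ⟨y, h⟩ else 0 with hfdef
    have harith : ArithmeticMap (↑A : Set K) f := by
      refine ⟨?_, ?_, ?_⟩
      · intro _
        have h1R : (1 : K) ∈ R := R.one_mem
        simp only [hfdef, dif_pos h1R]
        have h1 : (⟨(1 : K), h1R⟩ : R) = 1 := rfl
        rw [h1, map_one]
      · intro a b ha hb _
        have haR : a ∈ R := Algebra.subset_adjoin ha
        have hbR : b ∈ R := Algebra.subset_adjoin hb
        have habR : a + b ∈ R := R.add_mem haR hbR
        simp only [hfdef, dif_pos haR, dif_pos hbR, dif_pos habR]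
        have h2 : (⟨a + b, habR⟩ : R) = ⟨a, haR⟩ + ⟨b, hbR⟩ := rfl
        rw [h2, map_add]
      · intro a b ha hb _
        have haR : a ∈ R := Algebra.subset_adjoin ha
        have hbR : b ∈ R := Algebra.subset_adjoin hb
        have habR : a * b ∈ R := R.mul_mem haR hbR
        simp only [hfdef, dif_pos haR, dif_pos hbR, dif_pos habR]
        have h2 : (⟨a * b, habR⟩ : R) = ⟨a, haR⟩ * ⟨b, hbR⟩ := rfl
        rw [h2, map_mul]
    have hfr := hfix f harith
    simp only [hfdef, dif_pos hrR] at hfr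
    exact hfr
  haveI : Nontrivial R := by
    refine ⟨⟨0, 1, ?_⟩⟩
    intro h
    have h0 := congrArg Subtype.val h
    simp at h0
  haveI hft : Algebra.FiniteType ℚ R := by
    rw [hRdef]
    exact (Subalgebra.fg_iff_finiteType _).mp (Subalgebra.fg_adjoin_finset A)
  obtain ⟨I, hImax⟩ := Ideal.exists_maximal R
  haveI := hImax
  letI : Field (R ⧸ I) := Ideal.Quotient.field I
  haveI : Algebra.FiniteType ℚ (R ⧸ I) :=
    Algebra.FiniteType.of_surjective (Ideal.Quotient.mkₐ ℚ I)
      (Ideal.Quotient.mkₐ_surjective ℚ I)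
  haveI : Module.Finite ℚ (R ⧸ I) := finite_of_finite_type_of_isJacobsonRing ℚ (R ⧸ I)
  haveI : FiniteDimensional ℚ (R ⧸ I) := inferInstance
  haveI : NoZeroSMulDivisors ℚ (R ⧸ I) :=
    GroupWithZero.toNoZeroSMulDivisors
  haveI : Algebra.IsAlgebraic ℚ (R ⧸ I) := Algebra.IsAlgebraic.of_finite ℚ (R ⧸ I)
  set Ω := AlgebraicClosure ℚ with hΩdef
  haveI : Algebra.IsAlgebraic ℚ Ω := AlgebraicClosure.isAlgebraic ℚ
  let ι : (R ⧸ I) →ₐ[ℚ] Ω := IsAlgClosed.lift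
  set u : R ⧸ I := Ideal.Quotient.mkₐ ℚ I ⟨r, hrR⟩ with hudef
  -- an embedding into K for every finite-dimensional intermediate field of `Ω`
  have hom_into_K : ∀ (E : IntermediateField ℚ Ω), FiniteDimensional ℚ E →
      Nonempty (↥E →ₐ[ℚ] K) := by
    intro E hfd
    obtain ⟨θ, hθ⟩ := Field.exists_primitive_element ℚ ↥E
    have hint : IsIntegral ℚ θ := IsIntegral.of_finite ℚ θ
    obtain ⟨y, hy⟩ := hroots (minpoly ℚ θ) (minpoly.irreducible hint)
    have hmem : y ∈ (minpoly ℚ θ).aroots K := by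
      rw [Polynomial.mem_aroots]
      exact ⟨minpoly.ne_zero hint, hy⟩
    exact ⟨((IntermediateField.algHomAdjoinIntegralEquiv ℚ hint).symm ⟨y, hmem⟩).comp
      (((IntermediateField.equivOfEq hθ).trans IntermediateField.topEquiv).symm.toAlgHom)⟩
  -- corestriction of a hom `R⧸I → Ω` to an intermediate field containing its range
  let corest : ∀ (ψ : (R ⧸ I) →ₐ[ℚ] Ω) (E : IntermediateField ℚ Ω)
      (h : ∀ z, ψ z ∈ E), (R ⧸ I) →ₐ[ℚ] ↥E := fun ψ E h =>
    { toFun := fun z => ⟨ψ z, h z⟩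
      map_one' := Subtype.ext (map_one ψ)
      map_mul' := fun z₁ z₂ => Subtype.ext (map_mul ψ z₁ z₂)
      map_zero' := Subtype.ext (map_zero ψ)
      map_add' := fun z₁ z₂ => Subtype.ext (map_add ψ z₁ z₂)
      commutes' := fun c => Subtype.ext (by simpa using ψ.commutes c) }
  -- any two homs to Ω agree at u
  have key : ∀ ψ₁ ψ₂ : (R ⧸ I) →ₐ[ℚ] Ω, ψ₁ u = ψ₂ u := by
    intro ψ₁ ψ₂
    haveI fd1 : FiniteDimensional ℚ ↥ψ₁.fieldRange :=
      LinearEquiv.finiteDimensional (AlgEquiv.ofInjectiveField ψ₁).toLinearEquiv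
    haveI fd2 : FiniteDimensional ℚ ↥ψ₂.fieldRange :=
      LinearEquiv.finiteDimensional (AlgEquiv.ofInjectiveField ψ₂).toLinearEquiv
    set E := ψ₁.fieldRange ⊔ ψ₂.fieldRange with hE
    haveI : FiniteDimensional ℚ ↥E := IntermediateField.finiteDimensional_sup _ _
    obtain ⟨J⟩ := hom_into_K E inferInstance
    have h₁ : ∀ z, ψ₁ z ∈ E := fun z =>
      (le_sup_left : ψ₁.fieldRange ≤ E) ⟨z, rfl⟩
    have h₂ : ∀ z, ψ₂ z ∈ E := fun z =>
      (le_sup_right : ψ₂.fieldRange ≤ E) ⟨z, rfl⟩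
    have e₁ : J ⟨ψ₁ u, h₁ u⟩ = r :=
      fixhom (J.comp ((corest ψ₁ E h₁).comp (Ideal.Quotient.mkₐ ℚ I)))
    have e₂ : J ⟨ψ₂ u, h₂ u⟩ = r :=
      fixhom (J.comp ((corest ψ₂ E h₂).comp (Ideal.Quotient.mkₐ ℚ I)))
    have hJinj : Function.Injective J := J.toRingHom.injective
    have := hJinj (e₁.trans e₂.symm)
    exact Subtype.ext_iff.mp this
  -- ι u is rational
  have hrat : ι u ∈ (algebraMap ℚ Ω).range := by
    by_contra hnot
    have hint : IsIntegral ℚ (ι u) := (Algebra.IsAlgebraic.isAlgebraic (ι u)).isIntegral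
    set p := minpoly ℚ (ι u) with hpdef
    have hirr := minpoly.irreducible hint
    have hsep : p.Separable := hirr.separable
    have hsplit : (p.map (algebraMap ℚ Ω)).Splits := IsAlgClosed.splits _
    have hdeg : 1 < p.natDegree := by
      have h0 : 0 < p.natDegree := minpoly.natDegree_pos hint
      have h1 : p.natDegree ≠ 1 := by
        intro h
        apply hnot
        rw [← minpoly.degree_eq_one_iff, Polynomial.degree_eq_natDegree
          (minpoly.ne_zero hint), h]
        rfl
      omega
    have hcard : 1 < Fintype.card (p.rootSet Ω) := by
      rw [Polynomial.card_rootSet_eq_natDegree hsep hsplit]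
      exact hdeg
    have hmemroot : ι u ∈ p.rootSet Ω := by
      rw [Polynomial.mem_rootSet]
      exact ⟨minpoly.ne_zero hint, minpoly.aeval ℚ (ι u)⟩
    obtain ⟨ρ'sub, hρ'⟩ := Fintype.exists_ne_of_one_lt_card hcard ⟨ι u, hmemroot⟩
    set ρ' : Ω := (ρ'sub : Ω) with hρ'def
    have hmem2 : ρ' ∈ p.aroots Ω := by
      have h3 := ρ'sub.2
      rw [Polynomial.mem_rootSet] at h3
      rw [Polynomial.mem_aroots]
      exact ⟨h3.1, h3.2⟩
    set f0 : ↥(IntermediateField.adjoin ℚ {ι u}) →ₐ[ℚ] Ω :=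
      (IntermediateField.algHomAdjoinIntegralEquiv (K := Ω) ℚ hint).symm ⟨ρ', hmem2⟩ with hf0
    obtain ⟨σ, hσ⟩ := IntermediateField.exists_algHom_of_splits' (F := ℚ) (E := Ω) (K := Ω) (f := f0)
      (fun s => ⟨(IsIntegral.tower_top (R := ℚ) (A := ↥(IntermediateField.adjoin ℚ {ι u}))
          ((Algebra.IsAlgebraic.isAlgebraic (R := ℚ) s).isIntegral)),
        IsAlgClosed.splits _⟩)
    have hgen : σ (ι u) = ρ' := by
      have h4 := congrArg (fun (g : ↥(IntermediateField.adjoin ℚ {ι u}) →ₐ[ℚ] Ω) =>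
        g (IntermediateField.AdjoinSimple.gen ℚ (ι u))) hσ
      have h5 : f0 (IntermediateField.AdjoinSimple.gen ℚ (ι u)) = ρ' :=
        IntermediateField.algHomAdjoinIntegralEquiv_symm_apply_gen (K := Ω) ℚ hint ⟨ρ', hmem2⟩
      rw [h5] at h4
      rw [← h4]
      rfl
    have hne : σ (ι u) ≠ ι u := by
      rw [hgen]
      intro h
      exact hρ' (Subtype.ext h)
    exact hne ((key (σ.comp ι) ι).trans rfl) |>.elim
  obtain ⟨c, hc⟩ := hrat
  refine ⟨c, ?_⟩
  haveI : FiniteDimensional ℚ ↥ι.fieldRange :=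
    LinearEquiv.finiteDimensional (AlgEquiv.ofInjectiveField ι).toLinearEquiv
  obtain ⟨J⟩ := hom_into_K ι.fieldRange inferInstance
  have h₁ : ∀ z, ι z ∈ ι.fieldRange := fun z => ⟨z, rfl⟩
  have e₁ : J ⟨ι u, h₁ u⟩ = r :=
    fixhom (J.comp ((corest ι ι.fieldRange h₁).comp (Ideal.Quotient.mkₐ ℚ I)))
  have h6 : (⟨ι u, h₁ u⟩ : ↥ι.fieldRange) = algebraMap ℚ ↥ι.fieldRange c :=
    Subtype.ext (by simpa using hc.symm)
  rw [← e₁, h6, AlgHom.commutes]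
  exact (eq_ratCast (algebraMap ℚ K) c)

end TyszkaProof

/-- If `K` has characteristic zero and `r ∈ K̃`, then there are a positive integer `m` and a
polynomial `T(x, x₁, …, xₘ)` with integer coefficients such that `{r}` is the set of `x ∈ K`
with `∃ x₁ … xₘ ∈ K, T(x, x₁, …, xₘ) = 0`. -/
theorem arithFixed_definable_by_single_equation (K : Type*) [Field K] [CharZero K]
    (r : K) (hr : ArithFixed r) :
    ∃ (m : ℕ), 0 < m ∧ ∃ T : MvPolynomial (Fin (m + 1)) ℤ,
      ({r} : Set K) = {x : K | ∃ v : Fin m → K, MvPolynomial.aeval (Fin.cons x v) T = 0} := by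
  obtain ⟨A, hrA, hfix⟩ := hr
  by_cases hP : ∃ P : MvPolynomial (Fin 2) ℤ,
      ∀ a b : K, MvPolynomial.aeval ![a, b] P = 0 ↔ a = 0 ∧ b = 0
  · obtain ⟨P, HP⟩ := hP
    exact TyszkaProof.caseB r A hrA hfix P HP
  · obtain ⟨c, hc⟩ := TyszkaProof.rational_of_roots r A hrA hfix
      (TyszkaProof.exists_root_of_not_exP hP)
    refine ⟨1, one_pos,
      MvPolynomial.C (c.den : ℤ) * MvPolynomial.X 0 - MvPolynomial.C c.num, ?_⟩
    have hden : ((c.den : ℕ) : K) ≠ 0 := Nat.cast_ne_zero.mpr c.den_nz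
    ext x
    simp only [Set.mem_singleton_iff, Set.mem_setOf_eq]
    constructor
    · rintro rfl
      refine ⟨fun _ => 0, ?_⟩
      simp only [map_sub, map_mul, MvPolynomial.aeval_C, MvPolynomial.aeval_X, Fin.cons_zero,
        algebraMap_int_eq, eq_intCast, Int.cast_natCast, map_intCast, map_natCast]
      rw [hc, Rat.cast_def]
      field_simp
      simp
    · rintro ⟨v, hv⟩
      simp only [map_sub, map_mul, MvPolynomial.aeval_C, MvPolynomial.aeval_X, Fin.cons_zero,
        algebraMap_int_eq, eq_intCast, Int.cast_natCast, map_intCast, map_natCast] at hv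
      have hx : x = (c.num : K) / ((c.den : ℕ) : K) := by
        rw [eq_div_iff hden]
        linear_combination hv
      rw [hx, hc, Rat.cast_def]
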